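/- Let I be a proper ideal of B_n admitting a coherently Z-separating tuple (f_1,...,f_s) with respect to a term ordering σ, where f_i = z_i − h_i and h_i ∈ B_m = F_2[X\Z]. Then for every elimination ordering τ for Z, the ideal generated by z_1,...,z_s is contained in the leading term ideal LT_τ(I). -/
import Mathlib


open MvPolynomial

/-- A term ordering on the monomials (exponent tuples) of `K[x_1,…,x_n]`:
a linear order compatible with addition of exponents, with `1` (exponent `0`) least. -/
structure TermOrder (n : ℕ) where
  le : (Fin n →₀ ℕ) → (Fin n →₀ ℕ) → Prop
  total : ∀ a b, le a b ∨ le b a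
  antisymm : ∀ a b, le a b → le b a → a = b
  trans : ∀ a b c, le a b → le b c → le a c
  add_le_add : ∀ a b c, le a b → le (a + c) (b + c)
  zero_le : ∀ a, le 0 a

/-- `d` is the exponent of the leading term of `f` with respect to `σ`. -/
def IsLeadingTerm {n : ℕ} {K : Type*} [CommSemiring K] (σ : TermOrder n)
    (f : MvPolynomial (Fin n) K) (d : Fin n →₀ ℕ) : Prop :=
  d ∈ f.support ∧ ∀ d' ∈ f.support, σ.le d' d

/-- The field ideal `⟨X_1²−X_1, …, X_n²−X_n⟩` of `F_2[X_1,…,X_n]`. -/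
noncomputable def fieldIdeal (n : ℕ) : Ideal (MvPolynomial (Fin n) (ZMod 2)) :=
  Ideal.span (Set.range fun i => (X i : MvPolynomial (Fin n) (ZMod 2)) ^ 2 - X i)

/-- A polynomial is square-free (as a sum of terms) if all exponents are `≤ 1`. -/
def IsSquarefreePoly {n : ℕ} (F : MvPolynomial (Fin n) (ZMod 2)) : Prop :=
  ∀ d ∈ F.support, ∀ i, d i ≤ 1

/-- If a proper Boolean ideal `I` (represented by `I' ⊇ I_n`) admits a
coherently `Z`-separating tuple `(X (Z i) − H i)` with `H i ∈ B_m`, then for every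
elimination ordering `τ` for `Z`, the ideal generated by the `z_i` is contained in the
leading term ideal `LT_τ(I)` (computed via square-free canonical representatives). -/
theorem Z_in_leading_term_ideal_of_elim_ordering {n s : ℕ}
    (I' : Ideal (MvPolynomial (Fin n) (ZMod 2))) (hI' : I' ≠ ⊤)
    (hIn : fieldIdeal n ≤ I')
    (Z : Fin s → Fin n) (hZ : Function.Injective Z)
    (H : Fin s → MvPolynomial (Fin n) (ZMod 2))
    (hHS : ∀ i, H i ∈ MvPolynomial.supported (ZMod 2) ((Set.range Z)ᶜ))
    (hsfH : ∀ i, IsSquarefreePoly (H i))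
    (hFI : ∀ i, (X (Z i) : MvPolynomial (Fin n) (ZMod 2)) - H i ∈ I')
    (τ : TermOrder n)
    (helim : ∀ d d' : Fin n →₀ ℕ, (∀ i, d (Z i) = 0) → (∃ i, d' (Z i) ≠ 0) → τ.le d d') :
    Ideal.span (Set.range fun i =>
        Ideal.Quotient.mk (fieldIdeal n) (X (Z i) : MvPolynomial (Fin n) (ZMod 2))) ≤
      Ideal.span {q : MvPolynomial (Fin n) (ZMod 2) ⧸ fieldIdeal n |
        ∃ f ∈ I', IsSquarefreePoly f ∧ f ≠ 0 ∧ ∃ d, IsLeadingTerm τ f d ∧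
          q = Ideal.Quotient.mk (fieldIdeal n) (MvPolynomial.monomial d (1 : ZMod 2))} := by
  rw [Ideal.span_le]
  rintro q ⟨i, rfl⟩
  apply Ideal.subset_span
  -- key facts about H i
  have hHZ : ∀ j, ∀ d' ∈ (H i).support, d' (Z j) = 0 := by
    intro j d' hd'
    by_contra h0
    have hv : Z j ∈ (H i).vars := (MvPolynomial.mem_vars _).2 ⟨d', hd', by
      simpa [Finsupp.mem_support_iff] using h0⟩
    have := (MvPolynomial.mem_supported.mp (hHS i)) hv
    exact this ⟨j, rfl⟩
  set d : Fin n →₀ ℕ := Finsupp.single (Z i) 1 with hd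
  have hdZ : d (Z i) = 1 := by simp [hd]
  have hcoeffH : MvPolynomial.coeff d (H i) = 0 := by
    by_contra h
    have : d (Z i) = 0 := hHZ i d (by simpa [MvPolynomial.mem_support_iff] using h)
    simp [hdZ] at this
  set f : MvPolynomial (Fin n) (ZMod 2) := X (Z i) - H i with hf
  have hcoeff : MvPolynomial.coeff d f = 1 := by
    rw [hf, MvPolynomial.coeff_sub, hcoeffH, sub_zero, hd, MvPolynomial.coeff_X']
    simp
  have hdsupp : d ∈ f.support := by
    rw [MvPolynomial.mem_support_iff, hcoeff]; exact one_ne_zero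
  have hsuppsub : ∀ d' ∈ f.support, d' = d ∨ d' ∈ (H i).support := by
    intro d' hd'
    by_cases hcase : d' = d
    · exact Or.inl hcase
    · right
      have hne : MvPolynomial.coeff d' f ≠ 0 := (MvPolynomial.mem_support_iff).1 hd'
      rw [hf, MvPolynomial.coeff_sub] at hne
      have hX : MvPolynomial.coeff d' (X (Z i) : MvPolynomial (Fin n) (ZMod 2)) = 0 := by
        rw [MvPolynomial.coeff_X']
        simp [hd] at hcase ⊢
        intro h; exact absurd h.symm hcase
      rw [hX, zero_sub, neg_ne_zero] at hne
      exact (MvPolynomial.mem_support_iff).2 hne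
  refine ⟨f, hFI i, ?_, ?_, d, ⟨hdsupp, ?_⟩, ?_⟩
  · -- squarefree
    intro d' hd' j
    rcases hsuppsub d' hd' with rfl | hm
    · simp [hd, Finsupp.single_apply]
      split <;> simp
    · exact hsfH i d' hm j
  · intro h0
    rw [h0] at hdsupp
    simp at hdsupp
  · -- leading term
    intro d' hd'
    rcases hsuppsub d' hd' with rfl | hm
    · rcases τ.total d d with h | h <;> exact h
    · exact helim d' d (fun j => hHZ j d' hm) ⟨i, by simp [hdZ]⟩
  · rw [hd]; rfl
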